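/- Fix χ ∈ Fin 3 and a natural number k. Let μ be the infinite product probability measure on ℕ → Fin 3 whose factors are each the uniform probability measure on Fin 3 (i.e., the rolls of a fair three-sided die, independently and identically distributed). For ω : ℕ → Fin 3, define T(ω) to be the least natural number m such that m ≥ k and ω(m − 1 − i) ≠ χ for all i < k (the number of rolls needed until an uninterrupted run of k consecutive outcomes all different from χ), with T(ω) = +∞ if no such m exists. Then the expected value of T with respect to μ equals 3·(3/2)^k − 3. -/

import Mathlib

open MeasureTheory ENNReal NNReal Finset

namespace RunAux

variable (χ : Fin 3) (k : ℕ)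

/-- no run of `k` consecutive non-χ among positions `< n` (window form) -/
def good (n : ℕ) (s : ℕ → Fin 3) : Prop := ∀ a, a + k ≤ n → ∃ i < k, s (a + i) = χ

/-- length of maximal non-χ prefix among the first `n` positions -/
def run : ℕ → (ℕ → Fin 3) → ℕ
  | 0, _ => 0
  | n+1, s => if s 0 = χ then 0 else run n (fun i => s (i+1)) + 1

variable {χ k}

lemma run_le : ∀ n s, run χ n s ≤ n
  | 0, _ => le_rfl
  | n+1, s => by
    rw [run]; split
    · exact Nat.zero_le _
    · exact Nat.succ_le_succ (run_le n _)

lemma run_ne : ∀ n s, ∀ i < run χ n s, s i ≠ χ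
  | 0, s => by simp [run]
  | n+1, s => by
    rw [run]
    split
    · simp
    · intro i hi
      rcases Nat.eq_zero_or_eq_succ_pred i with h0 | h0
      · subst h0; assumption
      · rw [h0]
        exact run_ne n (fun j => s (j+1)) (i-1) (by omega)

lemma run_spec : ∀ n s, run χ n s = n ∨ s (run χ n s) = χ
  | 0, _ => Or.inl rfl
  | n+1, s => by
    rw [run]
    split
    · exact Or.inr (by assumption)
    · rcases run_spec n (fun j => s (j+1)) with h | h
      · exact Or.inl (by omega)
      · exact Or.inr h

lemma good_congr {n : ℕ} {s t : ℕ → Fin 3} (h : ∀ i < n, s i = t i) :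
    good χ k n s ↔ good χ k n t := by
  unfold good
  constructor <;> intro hg a ha <;> rcases hg a ha with ⟨i, hik, hi⟩ <;>
    exact ⟨i, hik, by rw [← hi, h (a+i) (by omega)]⟩

lemma run_lt_of_good {n : ℕ} {s : ℕ → Fin 3} (h : good χ k n s) :
    run χ n s < k := by
  rcases lt_or_ge n k with hn | hn
  · exact lt_of_le_of_lt (run_le n s) hn
  · by_contra hr
    push_neg at hr
    rcases h 0 (by omega) with ⟨i, hik, hi⟩
    exact run_ne (χ := χ) n s i (by omega) (by simpa using hi)

lemma good_succ {n : ℕ} {s : ℕ → Fin 3} :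
    good χ k (n+1) s ↔ good χ k n (fun i => s (i+1)) ∧ (k ≤ n+1 → ∃ i < k, s i = χ) := by
  constructor
  · intro h
    refine ⟨fun a ha => ?_, fun hkn => ?_⟩
    · rcases h (a+1) (by omega) with ⟨i, hik, hi⟩
      exact ⟨i, hik, by rw [← hi]; ring_nf⟩
    · rcases h 0 (by omega) with ⟨i, hik, hi⟩
      exact ⟨i, hik, by simpa using hi⟩
  · rintro ⟨h1, h2⟩ a ha
    rcases Nat.eq_zero_or_eq_succ_pred a with h0 | h0
    · subst h0
      rcases h2 (by omega) with ⟨i, hik, hi⟩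
      exact ⟨i, hik, by simpa using hi⟩
    · rcases h1 (a-1) (by omega) with ⟨i, hik, hi⟩
      exact ⟨i, hik, by rw [← hi]; congr 1; omega⟩


variable (χ k)

/-- extend a finite string to `ℕ → Fin 3` -/
def ext (n : ℕ) (f : Fin n → Fin 3) : ℕ → Fin 3 := fun i => if h : i < n then f ⟨i, h⟩ else 0

open Classical in
/-- number of good strings of length `n` with leading non-χ run exactly `r` -/
noncomputable def g (n r : ℕ) : ℕ :=
  (Finset.univ.filter fun f : Fin n → Fin 3 =>
    good χ k n (ext n f) ∧ run χ n (ext n f) = r).card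

open Classical in
noncomputable def cardGood (n : ℕ) : ℕ :=
  (Finset.univ.filter fun f : Fin n → Fin 3 => good χ k n (ext n f)).card

variable {χ k}

lemma ext_cons_succ (n : ℕ) (x : Fin 3) (t : Fin n → Fin 3) :
    (fun i => ext (n+1) (Fin.cons x t) (i+1)) = ext n t := by
  funext i
  unfold ext
  rcases lt_or_ge i n with h | h
  · rw [dif_pos (by omega), dif_pos h]
    exact Fin.cons_succ (α := fun _ => Fin 3) x t ⟨i, h⟩
  · rw [dif_neg (by omega), dif_neg (by omega)]

lemma ext_cons_zero (n : ℕ) (x : Fin 3) (t : Fin n → Fin 3) :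
    ext (n+1) (Fin.cons x t) 0 = x := by
  unfold ext
  rw [dif_pos (by omega)]
  exact Fin.cons_zero (α := fun _ => Fin 3) x t

lemma run_cons (n : ℕ) (x : Fin 3) (t : Fin n → Fin 3) :
    run χ (n+1) (ext (n+1) (Fin.cons x t)) =
      if x = χ then 0 else run χ n (ext n t) + 1 := by
  rw [run, ext_cons_zero, ext_cons_succ]

lemma good_cons (n : ℕ) (x : Fin 3) (t : Fin n → Fin 3) :
    good χ k (n+1) (ext (n+1) (Fin.cons x t)) ↔
      good χ k n (ext n t) ∧ (k ≤ n+1 → ∃ i < k, ext (n+1) (Fin.cons x t) i = χ) := by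
  rw [good_succ, ext_cons_succ]

lemma card_cons_split (n : ℕ) (P : (Fin (n+1) → Fin 3) → Prop) [DecidablePred P]
    [∀ x, DecidablePred (fun t : Fin n → Fin 3 => P (Fin.cons x t))] :
    (Finset.univ.filter P).card =
      ∑ x : Fin 3, (Finset.univ.filter fun t : Fin n → Fin 3 => P (Fin.cons x t)).card := by
  rw [Finset.card_eq_sum_card_fiberwise (t := Finset.univ) (f := fun f => f 0)
    (fun x _ => Finset.mem_univ _)]
  refine Finset.sum_congr rfl fun x _ => ?_
  rw [Finset.filter_filter]
  refine Finset.card_nbij' (fun f => Fin.tail f) (fun t => Fin.cons x t) ?_ ?_ ?_ ?_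
  · intro f hf
    simp only [Finset.mem_coe, Finset.mem_filter, Finset.mem_univ, true_and] at hf ⊢
    rw [show Fin.cons x (Fin.tail f) = f by rw [← hf.2]; exact Fin.cons_self_tail f]
    exact hf.1
  · intro t ht
    simp only [Finset.mem_coe, Finset.mem_filter, Finset.mem_univ, true_and] at ht ⊢
    exact ⟨ht, Fin.cons_zero (α := fun _ => Fin 3) x t⟩
  · intro f hf
    simp only [Finset.mem_coe, Finset.mem_filter, Finset.mem_univ, true_and] at hf
    rw [← hf.2]; exact Fin.cons_self_tail f
  · intro t _; exact Fin.tail_cons (α := fun _ => Fin 3) x t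

lemma cardGood_eq_sum (hk : 1 ≤ k) (n : ℕ) :
    cardGood χ k n = ∑ r ∈ Finset.range k, g χ k n r := by
  classical
  rw [cardGood, Finset.card_eq_sum_card_fiberwise (t := Finset.range k)
    (f := fun f => run χ n (ext n f)) ?_]
  · refine Finset.sum_congr rfl fun r _ => ?_
    rw [g, Finset.filter_filter]
  · intro f hf
    simp only [Finset.mem_coe, Finset.mem_filter, Finset.mem_univ, true_and] at hf
    exact Finset.mem_range.2 (run_lt_of_good hf)

lemma g_zero_zero (hk : 1 ≤ k) : g χ k 0 0 = 1 := by
  classical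
  rw [g, Finset.filter_true_of_mem (fun f _ => ⟨fun a ha => absurd ha (by omega), rfl⟩)]
  simp
lemma g_zero_succ (r : ℕ) : g χ k 0 (r+1) = 0 := by
  classical
  rw [g, Finset.card_eq_zero, Finset.filter_eq_empty_iff]
  intro f _
  rw [show run χ 0 (ext 0 f) = 0 from rfl]
  simp

lemma sum_fin3 (h : Fin 3 → ℕ) : ∑ x : Fin 3, h x = h χ + ∑ x ∈ Finset.univ.filter (· ≠ χ), h x := by
  classical
  rw [← Finset.sum_filter_add_sum_filter_not Finset.univ (· = χ) h]
  congr 1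
  rw [Finset.filter_eq', if_pos (Finset.mem_univ χ), Finset.sum_singleton]

lemma g_succ_zero (hk : 1 ≤ k) (n : ℕ) :
    g χ k (n+1) 0 = ∑ r ∈ Finset.range k, g χ k n r := by
  classical
  rw [g, card_cons_split, sum_fin3 (χ := χ), ← cardGood_eq_sum hk]
  have h2 : ∀ x ∈ Finset.univ.filter (· ≠ χ),
      (Finset.univ.filter fun t : Fin n → Fin 3 =>
        good χ k (n+1) (ext (n+1) (Fin.cons x t)) ∧
        run χ (n+1) (ext (n+1) (Fin.cons x t)) = 0).card = 0 := by
    intro x hx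
    simp only [Finset.mem_filter, Finset.mem_univ, true_and] at hx
    rw [Finset.card_eq_zero, Finset.filter_eq_empty_iff]
    intro t _
    rw [run_cons, if_neg hx]
    simp
  rw [Finset.sum_congr rfl h2, Finset.sum_const, smul_zero, add_zero, cardGood]
  congr 1
  refine Finset.filter_congr fun t _ => ?_
  rw [good_cons, run_cons, if_pos rfl]
  constructor
  · rintro ⟨⟨h, _⟩, _⟩; exact h
  · intro h
    exact ⟨⟨h, fun _ => ⟨0, hk, ext_cons_zero n χ t⟩⟩, rfl⟩

lemma g_succ_succ (n r : ℕ) (hr : r + 1 < k) :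
    g χ k (n+1) (r+1) = 2 * g χ k n r := by
  classical
  rw [g, card_cons_split, sum_fin3 (χ := χ)]
  have h1 : (Finset.univ.filter fun t : Fin n → Fin 3 =>
      good χ k (n+1) (ext (n+1) (Fin.cons χ t)) ∧
      run χ (n+1) (ext (n+1) (Fin.cons χ t)) = r+1).card = 0 := by
    rw [Finset.card_eq_zero, Finset.filter_eq_empty_iff]
    intro t _
    rw [run_cons, if_pos rfl]
    simp
  rw [h1, zero_add]
  have h2 : ∀ x ∈ Finset.univ.filter (· ≠ χ),
      (Finset.univ.filter fun t : Fin n → Fin 3 =>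
        good χ k (n+1) (ext (n+1) (Fin.cons x t)) ∧
        run χ (n+1) (ext (n+1) (Fin.cons x t)) = r+1).card = g χ k n r := by
    intro x hx
    simp only [Finset.mem_filter, Finset.mem_univ, true_and] at hx
    rw [g]
    congr 1
    refine Finset.filter_congr fun t _ => ?_
    rw [good_cons, run_cons, if_neg hx]
    simp only [Nat.add_right_cancel_iff]
    constructor
    · rintro ⟨⟨hg, _⟩, hrun⟩; exact ⟨hg, hrun⟩
    · rintro ⟨hg, hrun⟩
      refine ⟨⟨hg, fun hkn => ?_⟩, hrun⟩
      rcases run_spec (χ := χ) n (ext n t) with hs | hs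
      · omega
      · refine ⟨r+1, hr, ?_⟩
        have := ext_cons_succ n x t
        rw [show ext (n+1) (Fin.cons x t) (r+1) = ext n t r by
          rw [← congrFun this r]]
        rw [← hrun]; exact hs
  rw [Finset.sum_congr rfl h2, Finset.sum_const, smul_eq_mul]
  have : (Finset.univ.filter (· ≠ χ) : Finset (Fin 3)).card = 2 := by
    rw [Finset.filter_ne', Finset.card_erase_of_mem (Finset.mem_univ χ)]
    simp
  rw [this]

/-! ### series computations -/

variable (χ k)

noncomputable def u (r : ℕ) : ℝ≥0∞ := ∑' n, (g χ k n r : ℝ≥0∞) * (3:ℝ≥0∞)⁻¹ ^ n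

variable {χ k}

lemma h13 : (3:ℝ≥0∞)⁻¹ * 3 = 1 := ENNReal.inv_mul_cancel (by norm_num) (by norm_num)

lemma h1323 : (3:ℝ≥0∞)⁻¹ + 2/3 = 1 := by
  rw [show ((3:ℝ≥0∞))⁻¹ = ((3⁻¹ : ℝ≥0) : ℝ≥0∞) by rw [ENNReal.coe_inv (by norm_num)]; norm_num,
      show (2/3 : ℝ≥0∞) = ((2/3 : ℝ≥0) : ℝ≥0∞) by rw [ENNReal.coe_div (by norm_num)]; norm_num,
      ← ENNReal.coe_add,
      show (3⁻¹ + 2/3 : ℝ≥0) = 1 by apply NNReal.coe_injective; push_cast; norm_num]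
  norm_num

lemma hab : (2/3 : ℝ≥0∞) * (3/2) = 1 := by
  rw [show (2/3 : ℝ≥0∞) = ((2/3 : ℝ≥0) : ℝ≥0∞) by rw [ENNReal.coe_div (by norm_num)]; norm_num,
      show (3/2 : ℝ≥0∞) = ((3/2 : ℝ≥0) : ℝ≥0∞) by rw [ENNReal.coe_div (by norm_num)]; norm_num,
      ← ENNReal.coe_mul,
      show (2/3 * (3/2) : ℝ≥0) = 1 by apply NNReal.coe_injective; push_cast; norm_num]
  norm_num

lemma habk (k : ℕ) : (2/3 : ℝ≥0∞)^k * (3/2)^k = 1 := by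
  rw [← mul_pow, hab, one_pow]

lemma h23 : (2 : ℝ≥0∞) * 3⁻¹ = 2/3 := by
  rw [ENNReal.div_eq_inv_mul, mul_comm]

lemma key (k : ℕ) : (3:ℝ≥0∞)⁻¹ * (∑ r ∈ Finset.range k, (2/3)^r) + (2/3)^k = 1 := by
  induction k with
  | zero => simp
  | succ k ih =>
    rw [Finset.sum_range_succ, mul_add, pow_succ]
    calc (3:ℝ≥0∞)⁻¹ * (∑ r ∈ Finset.range k, (2/3)^r) + 3⁻¹ * (2/3)^k + (2/3)^k * (2/3)
        = (3:ℝ≥0∞)⁻¹ * (∑ r ∈ Finset.range k, (2/3)^r) + (3⁻¹ + 2/3) * (2/3)^k := by ring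
      _ = 1 := by rw [h1323, one_mul, ih]

lemma tsum_shift (f : ℕ → ℝ≥0∞) : ∑' n, f n = f 0 + ∑' n, f (n+1) :=
  tsum_eq_zero_add' ENNReal.summable

lemma u_zero (hk : 1 ≤ k) : u χ k 0 = 1 + 3⁻¹ * ∑ r ∈ Finset.range k, u χ k r := by
  rw [u, tsum_shift]
  congr 1
  · rw [g_zero_zero hk]; simp
  · calc ∑' n, (g χ k (n+1) 0 : ℝ≥0∞) * (3:ℝ≥0∞)⁻¹ ^ (n+1)
        = ∑' n, (3:ℝ≥0∞)⁻¹ * ∑ r ∈ Finset.range k, (g χ k n r : ℝ≥0∞) * (3:ℝ≥0∞)⁻¹ ^ n := by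
          refine tsum_congr fun n => ?_
          rw [g_succ_zero hk, pow_succ, Nat.cast_sum, Finset.sum_mul, Finset.mul_sum]
          exact Finset.sum_congr rfl fun j _ => by ring
      _ = 3⁻¹ * ∑ r ∈ Finset.range k, u χ k r := by
          rw [ENNReal.tsum_mul_left, Summable.tsum_finsetSum (fun r _ => ENNReal.summable)]
          rfl

lemma u_succ {r : ℕ} (hr : r + 1 < k) : u χ k (r+1) = (2/3) * u χ k r := by
  rw [u, tsum_shift]
  rw [g_zero_succ]
  simp only [Nat.cast_zero, zero_mul, zero_add]
  calc ∑' n, (g χ k (n+1) (r+1) : ℝ≥0∞) * (3:ℝ≥0∞)⁻¹ ^ (n+1)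
      = ∑' n, (2/3 : ℝ≥0∞) * ((g χ k n r : ℝ≥0∞) * (3:ℝ≥0∞)⁻¹ ^ n) := by
        refine tsum_congr fun n => ?_
        rw [g_succ_succ n r hr, pow_succ, Nat.cast_mul, Nat.cast_ofNat, ← h23]
        ring
    _ = (2/3) * u χ k r := by rw [ENNReal.tsum_mul_left]; rfl

lemma u_pow {r : ℕ} (hr : r < k) : u χ k r = (2/3)^r * u χ k 0 := by
  induction r with
  | zero => simp
  | succ r ih => rw [u_succ hr, ih (by omega), pow_succ]; ring

lemma partial_bound (hk : 1 ≤ k) :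
    ∀ N, ∀ r < k, ∑ n ∈ Finset.range N, (g χ k n r : ℝ≥0∞) * (3:ℝ≥0∞)⁻¹ ^ n
      ≤ (2/3)^r * (3/2)^k := by
  intro N
  induction N with
  | zero => intro r _; simp
  | succ N ih =>
    intro r hr
    rw [Finset.sum_range_succ']
    match r with
    | 0 =>
      have hterm : ∀ n, (g χ k (n+1) 0 : ℝ≥0∞) * (3:ℝ≥0∞)⁻¹ ^ (n+1)
          = ∑ j ∈ Finset.range k, (3:ℝ≥0∞)⁻¹ * ((g χ k n j : ℝ≥0∞) * (3:ℝ≥0∞)⁻¹ ^ n) := by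
        intro n
        rw [g_succ_zero hk, Nat.cast_sum, pow_succ, Finset.sum_mul]
        exact Finset.sum_congr rfl fun j _ => by ring
      have hgeom : ∑ j ∈ Finset.range k, (3:ℝ≥0∞)⁻¹ * ((2/3)^j * (3/2)^k)
          = (3⁻¹ * ∑ j ∈ Finset.range k, (2/3:ℝ≥0∞)^j) * (3/2)^k := by
        rw [Finset.mul_sum, Finset.sum_mul]
        exact Finset.sum_congr rfl fun j _ => by ring
      rw [g_zero_zero hk]
      simp only [Nat.cast_one, pow_zero, mul_one, one_mul]
      calc (∑ n ∈ Finset.range N, (g χ k (n+1) 0 : ℝ≥0∞) * (3:ℝ≥0∞)⁻¹ ^ (n+1)) + 1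
          ≤ (∑ j ∈ Finset.range k, (3:ℝ≥0∞)⁻¹ * ((2/3)^j * (3/2)^k)) + 1 := by
            refine add_le_add ?_ le_rfl
            calc ∑ n ∈ Finset.range N, (g χ k (n+1) 0 : ℝ≥0∞) * (3:ℝ≥0∞)⁻¹ ^ (n+1)
                = ∑ j ∈ Finset.range k,
                    (3:ℝ≥0∞)⁻¹ * ∑ n ∈ Finset.range N, (g χ k n j : ℝ≥0∞) * (3:ℝ≥0∞)⁻¹ ^ n := by
                  rw [Finset.sum_congr rfl fun n _ => hterm n, Finset.sum_comm]
                  exact Finset.sum_congr rfl fun j _ => (Finset.mul_sum _ _ _).symm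
              _ ≤ _ := Finset.sum_le_sum fun j hj =>
                  mul_le_mul_right (ih j (Finset.mem_range.1 hj)) _
        _ = ((3⁻¹ * ∑ j ∈ Finset.range k, (2/3:ℝ≥0∞)^j) + (2/3)^k) * (3/2)^k := by
            rw [add_mul, habk, hgeom]
        _ = (3/2)^k := by rw [key k, one_mul]
    | r+1 =>
      rw [g_zero_succ]
      simp only [Nat.cast_zero, zero_mul, mul_zero, add_zero, pow_zero, mul_one]
      calc ∑ n ∈ Finset.range N, (g χ k (n+1) (r+1) : ℝ≥0∞) * (3:ℝ≥0∞)⁻¹ ^ (n+1)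
          = (2/3) * ∑ n ∈ Finset.range N, (g χ k n r : ℝ≥0∞) * (3:ℝ≥0∞)⁻¹ ^ n := by
            rw [Finset.mul_sum]
            refine Finset.sum_congr rfl fun n _ => ?_
            rw [g_succ_succ n r hr, pow_succ, Nat.cast_mul, Nat.cast_ofNat, ← h23]
            ring
        _ ≤ (2/3) * ((2/3)^r * (3/2)^k) := mul_le_mul_right (ih r (by omega)) _
        _ = (2/3)^(r+1) * (3/2)^k := by rw [pow_succ]; ring

lemma u_zero_le (hk : 1 ≤ k) : u χ k 0 ≤ (3/2)^k := by
  rw [u, ENNReal.tsum_eq_iSup_sum]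
  refine iSup_le fun s => ?_
  calc ∑ n ∈ s, (g χ k n 0 : ℝ≥0∞) * (3:ℝ≥0∞)⁻¹ ^ n
      ≤ ∑ n ∈ Finset.range (s.sup id + 1), (g χ k n 0 : ℝ≥0∞) * (3:ℝ≥0∞)⁻¹ ^ n := by
        refine Finset.sum_le_sum_of_subset fun x hx => Finset.mem_range.2 ?_
        exact Nat.lt_succ_of_le (Finset.le_sup (f := id) hx)
    _ ≤ (2/3)^0 * (3/2)^k := partial_bound hk _ 0 hk
    _ = (3/2)^k := by rw [pow_zero, one_mul]

lemma u_zero_ne_top (hk : 1 ≤ k) : u χ k 0 ≠ ⊤ :=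
  ((u_zero_le hk).trans_lt (by
    exact ENNReal.pow_lt_top (ENNReal.div_lt_top (by norm_num) (by norm_num)))).ne

lemma u_zero_mul (hk : 1 ≤ k) : (2/3 : ℝ≥0∞)^k * u χ k 0 = 1 := by
  have h0 := u_zero (χ := χ) hk
  have h1 : u χ k 0 = 1 + (3⁻¹ * ∑ r ∈ Finset.range k, (2/3:ℝ≥0∞)^r) * u χ k 0 := by
    conv_lhs => rw [h0]
    congr 1
    rw [mul_assoc]
    congr 1
    rw [Finset.sum_mul]
    exact Finset.sum_congr rfl fun r hr => u_pow (Finset.mem_range.1 hr)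
  have hc : (3⁻¹ * ∑ r ∈ Finset.range k, (2/3:ℝ≥0∞)^r) * u χ k 0 ≠ ⊤ := by
    refine ENNReal.mul_ne_top (ne_top_of_le_ne_top ENNReal.one_ne_top ?_) (u_zero_ne_top hk)
    calc (3:ℝ≥0∞)⁻¹ * ∑ r ∈ Finset.range k, (2/3)^r
        ≤ 3⁻¹ * (∑ r ∈ Finset.range k, (2/3)^r) + (2/3)^k := le_self_add
      _ = 1 := key k
  have h2 : (3⁻¹ * ∑ r ∈ Finset.range k, (2/3:ℝ≥0∞)^r) * u χ k 0 + (2/3)^k * u χ k 0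
      = (3⁻¹ * ∑ r ∈ Finset.range k, (2/3:ℝ≥0∞)^r) * u χ k 0 + 1 :=
    calc (3⁻¹ * ∑ r ∈ Finset.range k, (2/3:ℝ≥0∞)^r) * u χ k 0 + (2/3)^k * u χ k 0
        = ((3⁻¹ * ∑ r ∈ Finset.range k, (2/3:ℝ≥0∞)^r) + (2/3)^k) * u χ k 0 :=
          (add_mul _ _ _).symm
      _ = u χ k 0 := by rw [key, one_mul]
      _ = 1 + (3⁻¹ * ∑ r ∈ Finset.range k, (2/3:ℝ≥0∞)^r) * u χ k 0 := h1
      _ = (3⁻¹ * ∑ r ∈ Finset.range k, (2/3:ℝ≥0∞)^r) * u χ k 0 + 1 := add_comm _ _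
  exact (ENNReal.add_right_inj hc).1 h2

lemma u_zero_eq (hk : 1 ≤ k) : u χ k 0 = (3/2)^k := by
  calc u χ k 0 = ((2/3 : ℝ≥0∞)^k * u χ k 0) * (3/2)^k := by
        rw [mul_comm ((2/3:ℝ≥0∞)^k), mul_assoc, habk, mul_one]
    _ = (3/2)^k := by rw [u_zero_mul hk, one_mul]

lemma sum_u_add_three (hk : 1 ≤ k) :
    (∑ r ∈ Finset.range k, u χ k r) + 3 = 3 * (3/2)^k := by
  have hsum : ∑ r ∈ Finset.range k, u χ k r
      = (∑ r ∈ Finset.range k, (2/3:ℝ≥0∞)^r) * u χ k 0 := by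
    rw [Finset.sum_mul]
    exact Finset.sum_congr rfl fun r hr => u_pow (Finset.mem_range.1 hr)
  calc (∑ r ∈ Finset.range k, u χ k r) + 3
      = (∑ r ∈ Finset.range k, (2/3:ℝ≥0∞)^r) * u χ k 0 + 3 * ((2/3)^k * u χ k 0) := by
        rw [hsum, u_zero_mul hk, mul_one]
    _ = 3 * ((3⁻¹ * ∑ r ∈ Finset.range k, (2/3:ℝ≥0∞)^r) * u χ k 0)
          + 3 * ((2/3)^k * u χ k 0) := by
        congr 1
        rw [← mul_assoc, ← mul_assoc, ENNReal.mul_inv_cancel (by norm_num) (by norm_num), one_mul]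
    _ = 3 * (((3⁻¹ * ∑ r ∈ Finset.range k, (2/3:ℝ≥0∞)^r) + (2/3)^k) * u χ k 0) := by
        rw [← mul_add, ← add_mul]
    _ = 3 * (3/2)^k := by rw [key, one_mul, u_zero_eq hk]

/-! ### measure computations -/

variable (χ k)

def A (n : ℕ) : Set (ℕ → Fin 3) := {ω | good χ k n ω}

variable {χ k}

lemma measurableSet_A (n : ℕ) : MeasurableSet (A χ k n) := by
  have h : A χ k n = ⋂ (a : ℕ), ⋂ (_ : a + k ≤ n), ⋃ (i : ℕ), ⋃ (_ : i < k),
      (fun ω : ℕ → Fin 3 => ω (a+i)) ⁻¹' {χ} := by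
    ext ω
    simp [A, good]
  rw [h]
  exact MeasurableSet.iInter fun a => MeasurableSet.iInter fun _ =>
    MeasurableSet.iUnion fun i => MeasurableSet.iUnion fun _ =>
      measurable_pi_apply (a+i) (measurableSet_singleton χ)

lemma measure_A {μ : Measure (ℕ → Fin 3)}
    (hμ : IsProjectiveLimit μ
      (fun J : Finset ℕ => Measure.pi fun _ : J => (PMF.uniformOfFintype (Fin 3)).toMeasure))
    (n : ℕ) :
    μ (A χ k n) = (cardGood χ k n : ℝ≥0∞) * (3:ℝ≥0∞)⁻¹ ^ n := by
  classical
  set J := Finset.range n with hJ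
  set B : Set ((j : J) → Fin 3) :=
    {s | good χ k n (fun i => if h : i ∈ J then s ⟨i, h⟩ else 0)} with hB
  have hcyl : A χ k n = cylinder J B := by
    ext ω
    simp only [A, Set.mem_setOf_eq, hB, cylinder, Set.mem_preimage]
    exact good_congr fun i hi => by rw [dif_pos (Finset.mem_range.2 hi)]; rfl
  rw [hcyl, hμ.measure_cylinder J MeasurableSet.of_discrete]
  have hsing : ∀ s₀ : (j : J) → Fin 3,
      Measure.pi (fun _ : J => (PMF.uniformOfFintype (Fin 3)).toMeasure) {s₀}
        = (3:ℝ≥0∞)⁻¹ ^ n := by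
    intro s₀
    rw [← Set.univ_pi_singleton s₀, Measure.pi_pi]
    have huni : ∀ j : J, (PMF.uniformOfFintype (Fin 3)).toMeasure {s₀ j} = (3:ℝ≥0∞)⁻¹ := by
      intro j
      rw [PMF.toMeasure_apply_singleton _ _ (measurableSet_singleton _),
        PMF.uniformOfFintype_apply]
      norm_num
    rw [Finset.prod_congr rfl fun j _ => huni j, Finset.prod_const]
    congr 1
    rw [Finset.card_univ, Fintype.card_coe, hJ, Finset.card_range]
  have hBcount : Measure.pi (fun _ : J => (PMF.uniformOfFintype (Fin 3)).toMeasure) B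
      = (B.toFinset.card : ℝ≥0∞) * (3:ℝ≥0∞)⁻¹ ^ n := by
    have hU : B = ⋃ s₀ ∈ B.toFinset, {s₀} := by simp
    conv_lhs => rw [hU]
    rw [measure_biUnion_finset ?_ (fun _ _ => measurableSet_singleton _)]
    · rw [Finset.sum_congr rfl fun s₀ _ => hsing s₀, Finset.sum_const, nsmul_eq_mul]
    · intro x _ y _ hxy
      exact Set.disjoint_singleton.2 hxy
  rw [hBcount]
  congr 2
  rw [cardGood]
  refine Finset.card_nbij' (fun s => fun i : Fin n => s ⟨i.1, Finset.mem_range.2 i.2⟩)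
    (fun f => fun j : J => f ⟨j.1, Finset.mem_range.1 j.2⟩) ?_ ?_ ?_ ?_
  · intro s hs
    simp only [Finset.mem_coe, Set.mem_toFinset, hB, Set.mem_setOf_eq] at hs
    simp only [Finset.mem_coe, Finset.mem_filter, Finset.mem_univ, true_and]
    refine (good_congr fun i hi => ?_).1 hs
    rw [dif_pos (Finset.mem_range.2 hi)]
    rw [ext, dif_pos hi]
  · intro f hf
    simp only [Finset.mem_coe, Finset.mem_filter, Finset.mem_univ, true_and] at hf
    simp only [Finset.mem_coe, Set.mem_toFinset, hB, Set.mem_setOf_eq]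
    refine (good_congr fun i hi => ?_).1 hf
    rw [ext, dif_pos hi, dif_pos (Finset.mem_range.2 hi)]
  · intro s _
    funext j
    rfl
  · intro f _
    funext i
    rfl

lemma T_gt_iff (hk : 1 ≤ k) {T : (ℕ → Fin 3) → ℝ≥0∞}
    (hT : ∀ ω, T ω = ⨅ m ∈ {m : ℕ | k ≤ m ∧ ∀ i < k, ω (m - 1 - i) ≠ χ}, (m : ℝ≥0∞))
    (n : ℕ) (ω : ℕ → Fin 3) :
    (n:ℝ≥0∞) < T ω ↔ ω ∈ A χ k n := by
  rw [hT ω]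
  constructor
  · intro h a ha
    by_contra hno
    push_neg at hno
    have hmem : (a+k) ∈ {m : ℕ | k ≤ m ∧ ∀ i < k, ω (m - 1 - i) ≠ χ} := by
      refine ⟨by omega, fun i hi => ?_⟩
      have h2 := hno (k-1-i) (by omega)
      rw [show a + (k-1-i) = a+k-1-i by omega] at h2
      exact h2
    have hle : (⨅ m ∈ {m : ℕ | k ≤ m ∧ ∀ i < k, ω (m - 1 - i) ≠ χ}, (m:ℝ≥0∞)) ≤ ((a+k : ℕ):ℝ≥0∞) :=
      iInf₂_le _ hmem
    have h3 : (n:ℝ≥0∞) < ((a+k:ℕ):ℝ≥0∞) := h.trans_le hle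
    rw [Nat.cast_lt] at h3
    omega
  · intro hg
    have hstep : ∀ m ∈ {m : ℕ | k ≤ m ∧ ∀ i < k, ω (m - 1 - i) ≠ χ},
        ((n+1 : ℕ):ℝ≥0∞) ≤ (m:ℝ≥0∞) := by
      rintro m ⟨hkm, hne⟩
      rw [Nat.cast_le]
      by_contra hlt
      push_neg at hlt
      rcases hg (m-k) (by omega) with ⟨i, hik, hi⟩
      refine hne (k-1-i) (by omega) ?_
      rw [show m-1-(k-1-i) = m-k+i by omega]
      exact hi
    calc (n:ℝ≥0∞) < ((n+1:ℕ):ℝ≥0∞) := by rw [Nat.cast_lt]; omega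
      _ ≤ _ := le_iInf₂ hstep

lemma tsum_ite_lt_nat (m : ℕ) :
    ∑' n : ℕ, (if (n:ℝ≥0∞) < (m:ℝ≥0∞) then (1:ℝ≥0∞) else 0) = m := by
  simp only [Nat.cast_lt]
  rw [tsum_eq_sum (s := Finset.range m) (fun n hn => if_neg (by simpa using hn))]
  rw [Finset.sum_congr rfl fun n hn => if_pos (Finset.mem_range.1 hn), Finset.sum_const,
    Finset.card_range, nsmul_eq_mul, mul_one]

lemma tsum_one_top : ∑' _ : ℕ, (1:ℝ≥0∞) = ⊤ :=
  ENNReal.tsum_const_eq_top_of_ne_zero one_ne_zero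

end RunAux

open RunAux in
/-- Fix `χ : Fin 3` and `k : ℕ`. Let `μ` be the infinite product probability measure on
`ℕ → Fin 3` whose factors are each the uniform probability measure on `Fin 3` (i.i.d. rolls
of a fair three-sided die); this is expressed by saying that `μ` is a probability measure
whose finite-dimensional projections are the finite products of the uniform measure on
`Fin 3`. For `ω : ℕ → Fin 3`, let `T ω` be the least natural number `m` with `m ≥ k` and
`ω (m - 1 - i) ≠ χ` for all `i < k` (the number of rolls needed until an uninterrupted run
of `k` consecutive outcomes all different from `χ`), valued `+∞` in `ℝ≥0∞` if no such `m`
exists. Then the expected value of `T` with respect to `μ` is `3 * (3 / 2) ^ k - 3`. -/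
theorem expected_rolls_for_run_of_nonChi (χ : Fin 3) (k : ℕ)
    (μ : Measure (ℕ → Fin 3)) [IsProbabilityMeasure μ]
    (hμ : IsProjectiveLimit μ
      (fun J : Finset ℕ => Measure.pi fun _ : J => (PMF.uniformOfFintype (Fin 3)).toMeasure))
    (T : (ℕ → Fin 3) → ℝ≥0∞)
    (hT : ∀ ω, T ω = ⨅ m ∈ {m : ℕ | k ≤ m ∧ ∀ i < k, ω (m - 1 - i) ≠ χ}, (m : ℝ≥0∞)) :
    ∫⁻ ω, T ω ∂μ = 3 * (3 / 2) ^ k - 3 := by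
  rcases Nat.eq_zero_or_pos k with hk0 | hk
  · subst hk0
    have hT0 : ∀ ω, T ω = 0 := by
      intro ω
      refine le_antisymm ?_ zero_le
      rw [hT ω]
      have h0 : (0:ℕ) ∈ {m : ℕ | 0 ≤ m ∧ ∀ i < 0, ω (m - 1 - i) ≠ χ} :=
        ⟨le_rfl, fun i hi => absurd hi (Nat.not_lt_zero i)⟩
      exact (iInf₂_le _ h0).trans_eq Nat.cast_zero
    rw [lintegral_congr hT0]
    simp [tsub_self]
  · have hA : ∀ n : ℕ, {ω : ℕ → Fin 3 | (n:ℝ≥0∞) < T ω} = A χ k n :=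
      fun n => Set.ext fun ω => T_gt_iff hk hT n ω
    have hpt : ∀ ω, T ω = ∑' n : ℕ,
        Set.indicator {ω' : ℕ → Fin 3 | (n:ℝ≥0∞) < T ω'} (fun _ => (1:ℝ≥0∞)) ω := by
      intro ω
      have hind : ∀ n : ℕ,
          Set.indicator {ω' : ℕ → Fin 3 | (n:ℝ≥0∞) < T ω'} (fun _ => (1:ℝ≥0∞)) ω
            = if (n:ℝ≥0∞) < T ω then 1 else 0 := fun n => by
        rw [Set.indicator_apply]; rfl
      rw [tsum_congr hind]
      by_cases hS : {m : ℕ | k ≤ m ∧ ∀ i < k, ω (m - 1 - i) ≠ χ}.Nonempty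
      · have hval : T ω
            = ((sInf {m : ℕ | k ≤ m ∧ ∀ i < k, ω (m - 1 - i) ≠ χ} : ℕ) : ℝ≥0∞) := by
          rw [hT ω]
          refine le_antisymm (iInf₂_le _ (Nat.sInf_mem hS)) (le_iInf₂ fun m hm => ?_)
          exact Nat.cast_le.2 (Nat.sInf_le hm)
        rw [hval, tsum_ite_lt_nat]
      · have hval : T ω = ⊤ := by
          rw [hT ω, Set.not_nonempty_iff_eq_empty.1 hS]
          simp
        rw [hval, tsum_congr fun n : ℕ => if_pos (ENNReal.natCast_lt_top n), tsum_one_top]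
    calc ∫⁻ ω, T ω ∂μ
        = ∫⁻ ω, ∑' n : ℕ,
            Set.indicator {ω' : ℕ → Fin 3 | (n:ℝ≥0∞) < T ω'} (fun _ => (1:ℝ≥0∞)) ω ∂μ :=
          lintegral_congr hpt
      _ = ∑' n : ℕ, ∫⁻ ω,
            Set.indicator {ω' : ℕ → Fin 3 | (n:ℝ≥0∞) < T ω'} (fun _ => (1:ℝ≥0∞)) ω ∂μ :=
          lintegral_tsum fun n =>
            (measurable_const.indicator (hA n ▸ measurableSet_A n)).aemeasurable
      _ = ∑' n : ℕ, μ (A χ k n) := by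
          refine tsum_congr fun n => ?_
          rw [hA n, lintegral_indicator_const (measurableSet_A n), one_mul]
      _ = ∑' n : ℕ, ∑ r ∈ Finset.range k, (g χ k n r : ℝ≥0∞) * (3:ℝ≥0∞)⁻¹ ^ n := by
          refine tsum_congr fun n => ?_
          rw [measure_A hμ n, cardGood_eq_sum hk, Nat.cast_sum, Finset.sum_mul]
      _ = ∑ r ∈ Finset.range k, u χ k r := by
          rw [Summable.tsum_finsetSum (fun r _ => ENNReal.summable)]
          rfl
      _ = 3 * (3 / 2) ^ k - 3 := ENNReal.eq_sub_of_add_eq (by norm_num) (sum_u_add_three hk)
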